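/- Let g be a Lie algebra over a field K, M a U(g)-module, x ∈ g, and v ∈ M such that x acts locally finitely on v (i.e. the K-span of {xⁱ·v : i ≥ 0} is finite-dimensional). Then x acts locally finitely on every element of the U(g)-submodule U(g)·v generated by v. -/
import Mathlib

section aux

variable {K : Type*} [Field K]
    {L : Type*} [LieRing L] [LieAlgebra K L] [Module.Finite K L]
    {M : Type*} [AddCommGroup M] [Module K M] [LieRingModule L M] [LieModule K L M]

/-- Orbit span of an endomorphism is invariant. -/
private lemma orbit_span_invariant {V : Type*} [AddCommGroup V] [Module K V]
    (f : Module.End K V) (w : V) {u : V}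
    (hu : u ∈ Submodule.span K (Set.range fun i : ℕ => (f ^ i) w)) :
    f u ∈ Submodule.span K (Set.range fun i : ℕ => (f ^ i) w) := by
  have : Submodule.map f (Submodule.span K (Set.range fun i : ℕ => (f ^ i) w)) ≤
      Submodule.span K (Set.range fun i : ℕ => (f ^ i) w) := by
    rw [Submodule.map_span, Submodule.span_le]
    rintro _ ⟨_, ⟨i, rfl⟩, rfl⟩
    refine Submodule.subset_span ⟨i + 1, ?_⟩
    show (f ^ (i + 1)) w = f ((f ^ i) w)
    rw [pow_succ']; rfl
  exact this ⟨u, hu, rfl⟩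

private lemma lf_iff (x : L) (w : M) :
    FiniteDimensional K
        (Submodule.span K (Set.range fun i : ℕ => ((LieModule.toEnd K L M x) ^ i) w)) ↔
      ∃ N : Submodule K M, FiniteDimensional K N ∧ w ∈ N ∧ ∀ u ∈ N, ⁅x, u⁆ ∈ N := by
  constructor
  · intro h
    refine ⟨_, h, Submodule.subset_span ⟨0, by simp⟩, fun u hu => ?_⟩
    simpa using orbit_span_invariant (LieModule.toEnd K L M x) w hu
  · rintro ⟨N, hN, hwN, hinv⟩
    have hle : Submodule.span K (Set.range fun i : ℕ => ((LieModule.toEnd K L M x) ^ i) w)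
        ≤ N := by
      rw [Submodule.span_le]
      rintro _ ⟨i, rfl⟩
      induction i with
      | zero => simpa using hwN
      | succ n ih =>
        show ((LieModule.toEnd K L M x) ^ (n + 1)) w ∈ N
        rw [pow_succ']
        simpa using hinv _ ih
    exact Submodule.finiteDimensional_of_le hle

end aux

/-- Let `g` be a finite-dimensional Lie algebra over a field `K`, `M` a `U(g)`-module
(equivalently a Lie module over `g`), `x ∈ g` and `v ∈ M` such that `x` acts locally finitely
on `v` (the span of the `xⁱ·v` is finite-dimensional). Then `x` acts locally finitely on
every element of the submodule `U(g)·v` generated by `v`. -/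
theorem statement3 {K : Type*} [Field K]
    {L : Type*} [LieRing L] [LieAlgebra K L] [Module.Finite K L]
    {M : Type*} [AddCommGroup M] [Module K M] [LieRingModule L M] [LieModule K L M]
    (x : L) (v : M)
    (hfin : FiniteDimensional K
      (Submodule.span K (Set.range fun i : ℕ => ((LieModule.toEnd K L M x) ^ i) v))) :
    ∀ w ∈ LieSubmodule.lieSpan K L ({v} : Set M),
      FiniteDimensional K
        (Submodule.span K (Set.range fun i : ℕ => ((LieModule.toEnd K L M x) ^ i) w)) := by
  -- The set of locally finite vectors forms a Lie submodule.
  let S : LieSubmodule K L M :=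
    { carrier := {w : M | ∃ N : Submodule K M,
        FiniteDimensional K N ∧ w ∈ N ∧ ∀ u ∈ N, ⁅x, u⁆ ∈ N}
      add_mem' := by
        rintro a b ⟨N₁, h₁, ha, hi₁⟩ ⟨N₂, h₂, hb, hi₂⟩
        refine ⟨N₁ ⊔ N₂, inferInstance, Submodule.add_mem _ (Submodule.mem_sup_left ha)
          (Submodule.mem_sup_right hb), fun u hu => ?_⟩
        rcases Submodule.mem_sup.mp hu with ⟨a', ha', b', hb', rfl⟩
        rw [lie_add]
        exact Submodule.add_mem _ (Submodule.mem_sup_left (hi₁ _ ha'))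
          (Submodule.mem_sup_right (hi₂ _ hb'))
      zero_mem' := ⟨⊥, inferInstance, Submodule.zero_mem _, by
        rintro u hu
        rw [Submodule.mem_bot] at hu
        simp [hu]⟩
      smul_mem' := by
        rintro c a ⟨N, h, ha, hi⟩
        exact ⟨N, h, Submodule.smul_mem _ _ ha, hi⟩
      lie_mem := by
        rintro y a ⟨N, h, ha, hi⟩
        -- F : span of the ad x orbit of y, finite dimensional and ad-x invariant
        let F : Submodule K L :=
          Submodule.span K (Set.range fun i : ℕ => ((LieAlgebra.ad K L x) ^ i) y)
        have hF : ∀ z ∈ F, ⁅x, z⁆ ∈ F := fun z hz => by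
          simpa using orbit_span_invariant (LieAlgebra.ad K L x) y hz
        have hyF : y ∈ F := Submodule.subset_span ⟨0, by simp⟩
        -- the bilinear bracket map
        let b : L →ₗ[K] M →ₗ[K] M := (LieModule.toEnd K L M : L →ₗ[K] Module.End K M)
        refine ⟨Submodule.map₂ b F N ⊔ N, ?_, ?_, ?_⟩
        · have hfg : (Submodule.map₂ b F N ⊔ N).FG := by
            apply Submodule.FG.sup
            · exact Submodule.FG.map₂ _ (IsNoetherian.noetherian F) (Module.Finite.iff_fg.mp h)
            · exact Module.Finite.iff_fg.mp h
          exact Module.Finite.iff_fg.mpr hfg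
        · exact Submodule.mem_sup_left (Submodule.apply_mem_map₂ b hyF ha)
        · intro u hu
          rcases Submodule.mem_sup.mp hu with ⟨p, hp, q, hq, rfl⟩
          rw [lie_add]
          refine Submodule.add_mem _ ?_ (Submodule.mem_sup_right (hi _ hq))
          have : Submodule.map (LieModule.toEnd K L M x) (Submodule.map₂ b F N) ≤
              Submodule.map₂ b F N ⊔ N := by
            rw [Submodule.map_le_iff_le_comap, Submodule.map₂_le]
            intro z hz u' hu'
            simp only [Submodule.mem_comap]
            have : (LieModule.toEnd K L M x) (b z u') = ⁅x, ⁅z, u'⁆⁆ := rfl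
            rw [this, leibniz_lie]
            exact Submodule.add_mem _
              (Submodule.mem_sup_left (Submodule.apply_mem_map₂ b (hF z hz) hu'))
              (Submodule.mem_sup_left (Submodule.apply_mem_map₂ b hz (hi _ hu')))
          exact this ⟨p, hp, rfl⟩ }
  intro w hw
  rw [lf_iff]
  have hv : v ∈ S := (lf_iff x v).mp hfin
  exact LieSubmodule.lieSpan_le.mpr (Set.singleton_subset_iff.mpr hv) hw
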